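/- For measurable functions u, v on a measurable set Ω ⊂ ℝ² with ∫_Ω u²(e^{u²} - 1) < ∞ and ∫_Ω v²(e^{v²} - 1) < ∞, one has ∫_Ω |uv|(e^{|uv|} - 1) ≤ (∫_Ω u²(e^{u²} - 1))^{1/2} (∫_Ω v²(e^{v²} - 1))^{1/2}. -/

import Mathlib

open MeasureTheory

lemma tsum_sqrt_mul_sqrt_le {f g : ℕ → ℝ} (hf : ∀ n, 0 ≤ f n) (hg : ∀ n, 0 ≤ g n)
    (sf : Summable f) (sg : Summable g) :
    ∑' n, Real.sqrt (f n) * Real.sqrt (g n) ≤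
      Real.sqrt (∑' n, f n) * Real.sqrt (∑' n, g n) := by
  have hsum : Summable (fun n => Real.sqrt (f n) * Real.sqrt (g n)) := by
    apply Summable.of_nonneg_of_le
      (fun n => mul_nonneg (Real.sqrt_nonneg _) (Real.sqrt_nonneg _))
      (fun n => ?_) ((sf.add sg).div_const 2)
    have h2 := two_mul_le_add_sq (Real.sqrt (f n)) (Real.sqrt (g n))
    rw [Real.sq_sqrt (hf n), Real.sq_sqrt (hg n)] at h2
    linarith
  refine Summable.tsum_le_of_sum_le hsum fun s => ?_
  calc ∑ n ∈ s, Real.sqrt (f n) * Real.sqrt (g n)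
      ≤ Real.sqrt (∑ n ∈ s, f n) * Real.sqrt (∑ n ∈ s, g n) :=
        Real.sum_sqrt_mul_sqrt_le s (fun n => hf n) (fun n => hg n)
    _ ≤ Real.sqrt (∑' n, f n) * Real.sqrt (∑' n, g n) := by
        apply mul_le_mul (Real.sqrt_le_sqrt (Summable.sum_le_tsum s (fun n _ => hf n) sf))
          (Real.sqrt_le_sqrt (Summable.sum_le_tsum s (fun n _ => hg n) sg))
          (Real.sqrt_nonneg _) (Real.sqrt_nonneg _)

lemma expm1_eq_tsum (x : ℝ) :
    Real.exp x - 1 = ∑' n : ℕ, x ^ (n + 1) / ((n + 1).factorial : ℝ) := by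
  have h : Real.exp x = ∑' n : ℕ, x ^ n / n.factorial := by
    rw [Real.exp_eq_exp_ℝ, NormedSpace.exp_eq_tsum_div]
  rw [h, Summable.tsum_eq_zero_add (Real.summable_pow_div_factorial x)]
  simp

lemma expm1_summand_nonneg {x : ℝ} (hx : 0 ≤ x) (n : ℕ) : 0 ≤ x ^ (n + 1) / ((n + 1).factorial : ℝ) :=
  div_nonneg (pow_nonneg hx _) (by positivity)

lemma summable_expm1 (x : ℝ) : Summable (fun n : ℕ => x ^ (n + 1) / ((n + 1).factorial : ℝ)) :=
  (Real.summable_pow_div_factorial x).comp_injective (add_left_injective 1)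

lemma key_ineq {a b : ℝ} (ha : 0 ≤ a) (hb : 0 ≤ b) :
    Real.exp (a * b) - 1 ≤
      Real.sqrt (Real.exp (a ^ 2) - 1) * Real.sqrt (Real.exp (b ^ 2) - 1) := by
  rw [expm1_eq_tsum, expm1_eq_tsum, expm1_eq_tsum]
  have hterm : ∀ n : ℕ, (a * b) ^ (n + 1) / ((n + 1).factorial : ℝ) =
      Real.sqrt ((a ^ 2) ^ (n + 1) / ((n + 1).factorial : ℝ)) * Real.sqrt ((b ^ 2) ^ (n + 1) / ((n + 1).factorial : ℝ)) := by
    intro n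
    rw [← Real.sqrt_mul (by positivity), eq_comm, show (a ^ 2) ^ (n + 1) / ((n + 1).factorial : ℝ) *
        ((b ^ 2) ^ (n + 1) / ((n + 1).factorial : ℝ)) =
        ((a * b) ^ (n + 1) / ((n + 1).factorial : ℝ)) ^ 2 by ring]
    exact Real.sqrt_sq (by positivity)
  calc ∑' n : ℕ, (a * b) ^ (n + 1) / ((n + 1).factorial : ℝ)
      = ∑' n : ℕ, Real.sqrt ((a ^ 2) ^ (n + 1) / ((n + 1).factorial : ℝ)) *
          Real.sqrt ((b ^ 2) ^ (n + 1) / ((n + 1).factorial : ℝ)) := by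
        exact tsum_congr hterm
    _ ≤ _ := tsum_sqrt_mul_sqrt_le
        (expm1_summand_nonneg (by positivity)) (expm1_summand_nonneg (by positivity))
        (summable_expm1 _) (summable_expm1 _)

theorem stmt_17 (Ω : Set (ℝ × ℝ)) (hΩ : MeasurableSet Ω)
    (u v : ℝ × ℝ → ℝ) (hu : Measurable u) (hv : Measurable v)
    (hiu : IntegrableOn (fun x => (u x) ^ 2 * (Real.exp ((u x) ^ 2) - 1)) Ω)
    (hiv : IntegrableOn (fun x => (v x) ^ 2 * (Real.exp ((v x) ^ 2) - 1)) Ω) :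
    ∫ x in Ω, |u x * v x| * (Real.exp |u x * v x| - 1) ≤
      Real.sqrt (∫ x in Ω, (u x) ^ 2 * (Real.exp ((u x) ^ 2) - 1)) *
      Real.sqrt (∫ x in Ω, (v x) ^ 2 * (Real.exp ((v x) ^ 2) - 1)) := by
  set μ := (volume : Measure (ℝ × ℝ)).restrict Ω with hμ
  set F : ℝ × ℝ → ℝ := fun x => |u x| * Real.sqrt (Real.exp ((u x) ^ 2) - 1) with hF
  set G : ℝ × ℝ → ℝ := fun x => |v x| * Real.sqrt (Real.exp ((v x) ^ 2) - 1) with hG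
  have hFm : Measurable F :=
    hu.abs.mul (((Real.measurable_exp.comp (hu.pow_const 2)).sub measurable_const).sqrt)
  have hGm : Measurable G :=
    hv.abs.mul (((Real.measurable_exp.comp (hv.pow_const 2)).sub measurable_const).sqrt)
  have hFn : ∀ x, 0 ≤ F x := fun x => mul_nonneg (abs_nonneg _) (Real.sqrt_nonneg _)
  have hGn : ∀ x, 0 ≤ G x := fun x => mul_nonneg (abs_nonneg _) (Real.sqrt_nonneg _)
  have hFsq : ∀ x, F x ^ 2 = (u x) ^ 2 * (Real.exp ((u x) ^ 2) - 1) := fun x => by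
    rw [hF]
    rw [mul_pow, sq_abs, Real.sq_sqrt (by simpa using Real.one_le_exp (sq_nonneg (u x)))]
  have hGsq : ∀ x, G x ^ 2 = (v x) ^ 2 * (Real.exp ((v x) ^ 2) - 1) := fun x => by
    rw [hG]
    rw [mul_pow, sq_abs, Real.sq_sqrt (by simpa using Real.one_le_exp (sq_nonneg (v x)))]
  have hiF2 : Integrable (fun x => F x ^ 2) μ := by simp only [hFsq]; exact hiu
  have hiG2 : Integrable (fun x => G x ^ 2) μ := by simp only [hGsq]; exact hiv
  have hFL2 : MemLp F 2 μ := (memLp_two_iff_integrable_sq hFm.aestronglyMeasurable).2 hiF2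
  have hGL2 : MemLp G 2 μ := (memLp_two_iff_integrable_sq hGm.aestronglyMeasurable).2 hiG2
  have hpt : ∀ x, |u x * v x| * (Real.exp |u x * v x| - 1) ≤ F x * G x := fun x => by
    have hk := key_ineq (abs_nonneg (u x)) (abs_nonneg (v x))
    rw [sq_abs, sq_abs, ← abs_mul] at hk
    calc |u x * v x| * (Real.exp |u x * v x| - 1)
        ≤ |u x * v x| * (Real.sqrt (Real.exp ((u x) ^ 2) - 1) *
            Real.sqrt (Real.exp ((v x) ^ 2) - 1)) :=
          mul_le_mul_of_nonneg_left hk (abs_nonneg _)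
      _ = F x * G x := by rw [hF, hG, abs_mul]; ring
  have hiFG : Integrable (fun x => F x * G x) μ := by
    refine Integrable.mono' ((hiF2.add hiG2).div_const 2)
      (hFm.mul hGm).aestronglyMeasurable (Filter.Eventually.of_forall fun x => ?_)
    rw [Real.norm_of_nonneg (mul_nonneg (hFn x) (hGn x))]
    have := two_mul_le_add_sq (F x) (G x)
    simp only [Pi.add_apply]
    linarith
  have h1 : ∫ x in Ω, |u x * v x| * (Real.exp |u x * v x| - 1) ≤ ∫ x, F x * G x ∂μ := by
    refine integral_mono_of_nonneg (Filter.Eventually.of_forall fun x => ?_) hiFG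
      (Filter.Eventually.of_forall hpt)
    exact mul_nonneg (abs_nonneg _) (by simpa using Real.one_le_exp (abs_nonneg (u x * v x)))
  have hpq : Real.HolderConjugate 2 2 := Real.HolderConjugate.two_two
  have h2 : ∫ x, F x * G x ∂μ ≤
      (∫ x, F x ^ (2 : ℝ) ∂μ) ^ ((1 : ℝ) / 2) * (∫ x, G x ^ (2 : ℝ) ∂μ) ^ ((1 : ℝ) / 2) := by
    refine integral_mul_le_Lp_mul_Lq_of_nonneg hpq (Filter.Eventually.of_forall hFn)
      (Filter.Eventually.of_forall hGn) ?_ ?_ <;>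
    · rw [show ENNReal.ofReal (2 : ℝ) = 2 by norm_num [ENNReal.ofReal_ofNat]]
      assumption
  refine h1.trans (h2.trans (le_of_eq ?_))
  have hr : ∀ y : ℝ, y ^ (2 : ℝ) = y ^ 2 := fun y => by
    rw [show (2 : ℝ) = ((2 : ℕ) : ℝ) by norm_num, Real.rpow_natCast]
  rw [← Real.sqrt_eq_rpow, ← Real.sqrt_eq_rpow]
  congr 2 <;> apply integral_congr_ae <;> exact Filter.Eventually.of_forall fun x => by
    simp [hr, hFsq, hGsq]
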